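/- Let α : ℕ → ℝ be nondecreasing with α_n ≥ 0 and α_n → ∞, and let θ : ℕ → ℂ satisfy ∑_{n=1}^∞ |θ_n| e^{−α_n/p} ≤ 1 for every p ∈ ℕ. Then the Rhaly operator R_θ is power bounded on Λ_1(α) with respect to the sup-seminorms: for every p ∈ ℕ, every k ≥ 1 and every n ∈ ℕ, sup_{m} |(R_θ^k e_n)_m| · e^{−α_m/p} ≤ e^{−α_n/(3p)}, i.e. ‖R_θ^k e_n‖_p ≤ ‖e_n‖_{3p} where ‖x‖_q = sup_m |x_m| e^{−α_m/q}. -/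

import Mathlib

open scoped BigOperators

/-- The Rhaly map: `(R_θ x)_n = (∑_{j≤n} x_j) · θ_n` (indices starting at 0). -/
noncomputable def rhaly (θ x : ℕ → ℂ) : ℕ → ℂ :=
  fun n => (∑ j ∈ Finset.range (n + 1), x j) * θ n

/-- The `n`-th unit coordinate sequence. -/
noncomputable def unitSeq (n : ℕ) : ℕ → ℂ := fun m => if m = n then 1 else 0

/-- If `‖θ‖_p = ∑_n |θ_n| e^{-α_n/p} ≤ 1` for every `p`, then `R_θ` is
power bounded on `Λ_1(α)` with respect to the sup-seminorms:
`sup_m |(R_θ^k e_n)_m| e^{-α_m/p} ≤ e^{-α_n/(3p)}`, i.e. `‖R_θ^k e_n‖_p ≤ ‖e_n‖_{3p}`. -/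
theorem rhaly_powerBounded_powerSeriesFinite
    (α : ℕ → ℝ) (hα_mono : Monotone α) (hα_nonneg : ∀ n, 0 ≤ α n)
    (hα_top : Filter.Tendsto α Filter.atTop Filter.atTop)
    (θ : ℕ → ℂ)
    (hθsum : ∀ p : ℕ, 0 < p → Summable fun n => ‖θ n‖ * Real.exp (-(α n) / p))
    (hθ : ∀ p : ℕ, 0 < p → ∑' n : ℕ, ‖θ n‖ * Real.exp (-(α n) / p) ≤ 1)
    (p k : ℕ) (hp : 0 < p) (hk : 1 ≤ k) (n m : ℕ) :
    ‖(rhaly θ)^[k] (unitSeq n) m‖ * Real.exp (-(α m) / p)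
      ≤ Real.exp (-(α n) / (3 * p)) := by
  -- support: (R^k e_n) m = 0 for m < n
  have hsupp : ∀ k m, m < n → (rhaly θ)^[k] (unitSeq n) m = 0 := by
    intro k
    induction k with
    | zero => intro m hm; simp [unitSeq, Nat.ne_of_lt hm]
    | succ k ih =>
      intro m hm
      rw [Function.iterate_succ_apply']
      simp only [rhaly]
      rw [Finset.sum_eq_zero, zero_mul]
      intro j hj
      exact ih j (lt_of_le_of_lt (Nat.lt_succ_iff.mp (Finset.mem_range.mp hj)) hm)
  set S : ℕ → ℝ := fun m => ∑ j ∈ Finset.range (m + 1), ‖θ j‖ with hSdef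
  have hSnonneg : ∀ m, 0 ≤ S m := fun m => Finset.sum_nonneg fun j _ => norm_nonneg _
  have hSmono : Monotone S := fun a b hab =>
    Finset.sum_le_sum_of_subset_of_nonneg
      (Finset.range_subset_range.mpr (by omega)) (fun j _ _ => norm_nonneg _)
  -- partial sums of ‖θ‖ are controlled by exp(α m / q)
  have hSle : ∀ q : ℕ, 0 < q → ∀ m, S m ≤ Real.exp (α m / q) := by
    intro q hq m
    have hq' : (0 : ℝ) < q := by exact_mod_cast hq
    calc S m ≤ ∑ j ∈ Finset.range (m + 1),
          ‖θ j‖ * Real.exp (-(α j) / q) * Real.exp (α m / q) := by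
          apply Finset.sum_le_sum
          intro j hj
          rw [mul_assoc, ← Real.exp_add]
          have hαle := hα_mono (Nat.lt_succ_iff.mp (Finset.mem_range.mp hj))
          have hexp : (1 : ℝ) ≤ Real.exp (-(α j) / q + α m / q) := by
            apply Real.one_le_exp
            rw [← add_div]
            apply div_nonneg (by linarith) hq'.le
          exact le_mul_of_one_le_right (norm_nonneg _) hexp
      _ = (∑ j ∈ Finset.range (m + 1), ‖θ j‖ * Real.exp (-(α j) / q))
            * Real.exp (α m / q) := by rw [← Finset.sum_mul]
      _ ≤ 1 * Real.exp (α m / q) := by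
          gcongr
          exact le_trans
            (Summable.sum_le_tsum _ (fun i _ => by positivity) (hθsum q hq)) (hθ q hq)
      _ = Real.exp (α m / q) := one_mul _
  -- main bound by induction
  have hbound : ∀ k m, ‖(rhaly θ)^[k + 1] (unitSeq n) m‖ ≤ ‖θ m‖ * S m ^ k := by
    intro k
    induction k with
    | zero =>
      intro m
      simp only [zero_add, Function.iterate_one, pow_zero, mul_one, rhaly]
      rw [norm_mul]
      have h1 : ‖∑ j ∈ Finset.range (m + 1), unitSeq n j‖ ≤ 1 := by
        simp only [unitSeq]
        rw [Finset.sum_ite_eq' (Finset.range (m + 1)) n (fun _ => (1 : ℂ))]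
        split <;> simp
      exact mul_le_of_le_one_left (norm_nonneg _) h1
    | succ k ih =>
      intro m
      rw [Function.iterate_succ_apply']
      simp only [rhaly]
      rw [norm_mul, mul_comm]
      have h2 : ‖∑ j ∈ Finset.range (m + 1), (rhaly θ)^[k + 1] (unitSeq n) j‖
          ≤ S m ^ (k + 1) := by
        calc ‖∑ j ∈ Finset.range (m + 1), (rhaly θ)^[k + 1] (unitSeq n) j‖
            ≤ ∑ j ∈ Finset.range (m + 1), ‖(rhaly θ)^[k + 1] (unitSeq n) j‖ :=
              norm_sum_le _ _
          _ ≤ ∑ j ∈ Finset.range (m + 1), ‖θ j‖ * S m ^ k := by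
              apply Finset.sum_le_sum
              intro j hj
              refine le_trans (ih j) ?_
              exact mul_le_mul_of_nonneg_left
                (pow_le_pow_left₀ (hSnonneg j)
                  (hSmono (Nat.lt_succ_iff.mp (Finset.mem_range.mp hj))) k)
                (norm_nonneg _)
          _ = S m * S m ^ k := by rw [← Finset.sum_mul]
          _ = S m ^ (k + 1) := (pow_succ' _ _).symm
      exact mul_le_mul_of_nonneg_left h2 (norm_nonneg _)
  have hp' : (0 : ℝ) < p := by exact_mod_cast hp
  rcases lt_or_ge m n with hm | hm
  · rw [hsupp k m hm]
    simp [Real.exp_nonneg]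
  · -- m ≥ n
    have hθm : ‖θ m‖ ≤ Real.exp (α m / (3 * p)) := by
      have h3p : 0 < 3 * p := by omega
      have hterm : ‖θ m‖ * Real.exp (-(α m) / (3 * p : ℕ)) ≤ 1 :=
        le_trans (Summable.le_tsum (hθsum _ h3p) m (fun i _ => by positivity)) (hθ _ h3p)
      have hc : ((3 * p : ℕ) : ℝ) = 3 * (p : ℝ) := by push_cast; ring
      rw [hc] at hterm
      have := mul_le_mul_of_nonneg_right hterm (Real.exp_nonneg (α m / (3 * p)))
      rw [mul_assoc, ← Real.exp_add, one_mul] at this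
      have heq : -(α m) / (3 * (p : ℝ)) + α m / (3 * p) = 0 := by ring
      rwa [heq, Real.exp_zero, mul_one] at this
    have hSk : S m ^ (k - 1) ≤ Real.exp (α m / (3 * p)) := by
      rcases Nat.eq_or_lt_of_le hk with hk1 | hk2
      · rw [← hk1]
        simp only [Nat.sub_self, pow_zero]
        exact Real.one_le_exp (div_nonneg (hα_nonneg m) (by positivity))
      · have hr : 0 < k - 1 := by omega
        have hq : 0 < 3 * p * (k - 1) := Nat.mul_pos (by omega) hr
        have h1 : S m ≤ Real.exp (α m / (3 * p * (k - 1) : ℕ)) := hSle _ hq m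
        have h2 : S m ^ (k - 1) ≤ Real.exp (α m / (3 * p * (k - 1) : ℕ)) ^ (k - 1) := by
          gcongr
        refine le_trans h2 ?_
        rw [← Real.exp_nat_mul]
        apply Real.exp_le_exp.mpr
        have hc : ((3 * p * (k - 1) : ℕ) : ℝ) = 3 * (p : ℝ) * ((k - 1 : ℕ) : ℝ) := by
          push_cast; ring
        rw [hc]
        have hkpos : (0 : ℝ) < ((k - 1 : ℕ) : ℝ) := by exact_mod_cast hr
        rw [mul_div_assoc', div_le_div_iff₀ (by positivity) (by positivity)]
        exact le_of_eq (by ring)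
    -- combine
    have hkk : k = (k - 1) + 1 := by omega
    have hmain : ‖(rhaly θ)^[k] (unitSeq n) m‖ ≤ ‖θ m‖ * S m ^ (k - 1) := by
      rw [hkk]; exact hbound (k - 1) m
    have hαnm : α n ≤ α m := hα_mono hm
    calc ‖(rhaly θ)^[k] (unitSeq n) m‖ * Real.exp (-(α m) / p)
        ≤ (Real.exp (α m / (3 * p)) * Real.exp (α m / (3 * p)))
            * Real.exp (-(α m) / p) := by
          apply mul_le_mul_of_nonneg_right _ (Real.exp_nonneg _)
          exact le_trans hmain (mul_le_mul hθm hSk (by positivity) (Real.exp_nonneg _))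
      _ = Real.exp (-(α m) / (3 * p)) := by
          rw [← Real.exp_add, ← Real.exp_add]
          congr 1
          field_simp
          ring
      _ ≤ Real.exp (-(α n) / (3 * p)) := by
          apply Real.exp_le_exp.mpr
          apply div_le_div_of_nonneg_right _ (by positivity)
          · linarith
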